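/- Let J be a C¹ almost complex structure on ℝ^{2n} (J² = −id) and f : 𝔻 → ℝ^{2n} a C² J-holomorphic disc (f_x + J(f)f_y = 0). Let φ = a + ib : 𝔻 → ℂ be holomorphic (so a_x = b_y, a_y = −b_x). Then the vector field V := a·f' + b·J(f)f', where f' := f_x, is a J-holomorphic variational vector field along f, i.e., V_x + J(f)V_y + d_fJ(V)f_y = 0. -/

import Mathlib

open Metric
set_option maxHeartbeats 1000000

theorem holomorphic_multiple_is_variational {n : ℕ}
    (J : (Fin (2 * n) → ℝ) → ((Fin (2 * n) → ℝ) →L[ℝ] (Fin (2 * n) → ℝ)))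
    (hJ2 : ∀ z, (J z).comp (J z) = -ContinuousLinearMap.id ℝ (Fin (2 * n) → ℝ))
    (hJsmooth : ContDiff ℝ 1 J)
    (f : ℂ → (Fin (2 * n) → ℝ))
    (hf : ContDiffOn ℝ 2 f (ball (0 : ℂ) 1))
    (hJhol : ∀ ζ ∈ ball (0 : ℂ) 1,
      fderiv ℝ f ζ 1 + J (f ζ) (fderiv ℝ f ζ Complex.I) = 0)
    (φ : ℂ → ℂ) (hφ : DifferentiableOn ℂ φ (ball (0 : ℂ) 1))
    (V : ℂ → (Fin (2 * n) → ℝ))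
    (hV : V = fun ζ => (φ ζ).re • (fderiv ℝ f ζ 1)
      + (φ ζ).im • (J (f ζ) (fderiv ℝ f ζ 1))) :
    ∀ ζ ∈ ball (0 : ℂ) 1,
      fderiv ℝ V ζ 1 + J (f ζ) (fderiv ℝ V ζ Complex.I)
        + (fderiv ℝ J (f ζ) (V ζ)) (fderiv ℝ f ζ Complex.I) = 0 := by
  intro ζ hζ
  have hU : IsOpen (ball (0:ℂ) 1) := isOpen_ball
  have hζU : ball (0:ℂ) 1 ∈ nhds ζ := hU.mem_nhds hζ
  -- J ∘ J = -1 pointwise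
  have hJJ : ∀ z v, J z (J z v) = -v := by
    intro z v
    have := ContinuousLinearMap.ext_iff.1 (hJ2 z) v
    simpa using this
  -- f is C² hence differentiable, and its fderiv is C¹ on the ball
  have hdfζ : DifferentiableAt ℝ f ζ := ((hf ζ hζ).contDiffAt hζU).differentiableAt two_ne_zero
  have hfC1 : ContDiffOn ℝ 1 (fderiv ℝ f) (ball (0:ℂ) 1) :=
    hf.fderiv_of_isOpen hU (by norm_num)
  have hd2 : DifferentiableAt ℝ (fderiv ℝ f) ζ :=
    ((hfC1 ζ hζ).contDiffAt hζU).differentiableAt one_ne_zero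
  set D2 := fderiv ℝ (fderiv ℝ f) ζ with hD2def
  have hD2 : HasFDerivAt (fderiv ℝ f) D2 ζ := hd2.hasFDerivAt
  have hsymm : ∀ v w : ℂ, D2 v w = D2 w v :=
    fun v w => ((hf ζ hζ).contDiffAt hζU).isSymmSndFDerivAt (by simp [minSmoothness_of_isRCLikeNormedField]) v w
  -- derivatives of fx and fy
  have hfx : HasFDerivAt (fun z => fderiv ℝ f z (1:ℂ)) (D2.flip (1:ℂ)) ζ := by
    simpa using hD2.clm_apply (hasFDerivAt_const (1:ℂ) ζ)
  have hfy : HasFDerivAt (fun z => fderiv ℝ f z Complex.I) (D2.flip Complex.I) ζ := by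
    simpa using hD2.clm_apply (hasFDerivAt_const Complex.I ζ)
  set Fx := fderiv ℝ f ζ 1 with hFx
  set Fy := fderiv ℝ f ζ Complex.I with hFy
  set dJ := fderiv ℝ J (f ζ) with hdJ
  -- derivative of z ↦ J (f z)
  have hJf : HasFDerivAt (fun z => J (f z)) (dJ.comp (fderiv ℝ f ζ)) ζ :=
    ((hJsmooth.differentiable one_ne_zero (f ζ)).hasFDerivAt).comp ζ hdfζ.hasFDerivAt
  -- differentiate the J-holomorphy equation
  have hgd : HasFDerivAt (fun z => fderiv ℝ f z 1 + J (f z) (fderiv ℝ f z Complex.I))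
      (D2.flip (1:ℂ) + ((J (f ζ)).comp (D2.flip Complex.I)
        + (dJ.comp (fderiv ℝ f ζ)).flip Fy)) ζ :=
    hfx.add (hJf.clm_apply hfy)
  have hkey : (D2.flip (1:ℂ) + ((J (f ζ)).comp (D2.flip Complex.I)
        + (dJ.comp (fderiv ℝ f ζ)).flip Fy)) = 0 := by
    have h0 : (fun z => fderiv ℝ f z 1 + J (f z) (fderiv ℝ f z Complex.I))
        =ᶠ[nhds ζ] (fun _ => (0 : Fin (2*n) → ℝ)) := by
      filter_upwards [hζU] with z hz using hJhol z hz
    calc (D2.flip (1:ℂ) + ((J (f ζ)).comp (D2.flip Complex.I)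
          + (dJ.comp (fderiv ℝ f ζ)).flip Fy))
        = fderiv ℝ (fun z => fderiv ℝ f z 1 + J (f z) (fderiv ℝ f z Complex.I)) ζ :=
          hgd.fderiv.symm
      _ = fderiv ℝ (fun _ => (0 : Fin (2*n) → ℝ)) ζ := h0.fderiv_eq
      _ = 0 := fderiv_const_apply 0
  have hEx : D2 1 1 + (J (f ζ) (D2 1 Complex.I) + dJ Fx Fy) = 0 := by
    have := ContinuousLinearMap.ext_iff.1 hkey 1
    simpa [hFx] using this
  have hEy : D2 1 Complex.I + (J (f ζ) (D2 Complex.I Complex.I) + dJ Fy Fy) = 0 := by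
    have := ContinuousLinearMap.ext_iff.1 hkey Complex.I
    simpa [hFy, hsymm 1 Complex.I] using this
  -- J Fx = Fy and J Fy = -Fx
  have hJFy : J (f ζ) Fy = -Fx := eq_neg_of_add_eq_zero_right (hJhol ζ hζ)
  have hJFx : J (f ζ) Fx = Fy := by
    have h : Fx = -(J (f ζ) Fy) := by rw [hJFy, neg_neg]
    rw [h, map_neg, hJJ, neg_neg]
  -- V equals a • fx + b • fy near ζ
  have hWV : V =ᶠ[nhds ζ] (fun z => (φ z).re • fderiv ℝ f z 1
      + (φ z).im • fderiv ℝ f z Complex.I) := by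
    filter_upwards [hζU] with z hz
    rw [hV]
    dsimp only
    have h1 : J (f z) (fderiv ℝ f z 1) = fderiv ℝ f z Complex.I := by
      have h2 : fderiv ℝ f z 1 = -(J (f z) (fderiv ℝ f z Complex.I)) :=
        eq_neg_of_add_eq_zero_left (hJhol z hz)
      rw [h2, map_neg, hJJ, neg_neg]
    rw [h1]
  -- complex derivative of φ and Cauchy–Riemann
  set L := (fderiv ℂ φ ζ).restrictScalars ℝ with hL
  have hLd : HasFDerivAt φ L ζ := ((hφ.differentiableAt hζU).hasFDerivAt).restrictScalars ℝ
  set p := fderiv ℂ φ ζ 1 with hp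
  have hL1 : L 1 = p := rfl
  have hLI : L Complex.I = Complex.I * p := by
    have h := (fderiv ℂ φ ζ).map_smul Complex.I (1:ℂ)
    simp only [smul_eq_mul, mul_one] at h
    simpa [hL, hp] using h
  have hA : HasFDerivAt (fun z => (φ z).re) (Complex.reCLM.comp L) ζ :=
    (Complex.reCLM.hasFDerivAt).comp ζ hLd
  have hB : HasFDerivAt (fun z => (φ z).im) (Complex.imCLM.comp L) ζ :=
    (Complex.imCLM.hasFDerivAt).comp ζ hLd
  -- derivative of V
  have hWd : HasFDerivAt (fun z => (φ z).re • fderiv ℝ f z 1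
      + (φ z).im • fderiv ℝ f z Complex.I)
      (((φ ζ).re • (D2.flip (1:ℂ)) + (Complex.reCLM.comp L).smulRight Fx)
        + ((φ ζ).im • (D2.flip Complex.I) + (Complex.imCLM.comp L).smulRight Fy)) ζ :=
    (hA.smul hfx).add (hB.smul hfy)
  have hVd : fderiv ℝ V ζ = (((φ ζ).re • (D2.flip (1:ℂ)) + (Complex.reCLM.comp L).smulRight Fx)
        + ((φ ζ).im • (D2.flip Complex.I) + (Complex.imCLM.comp L).smulRight Fy)) := by
    rw [hWV.fderiv_eq, hWd.fderiv]
  set a := (φ ζ).re with ha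
  set b := (φ ζ).im with hb
  have hVx : fderiv ℝ V ζ 1 = a • D2 1 1 + p.re • Fx + b • D2 1 Complex.I + p.im • Fy := by
    rw [hVd]
    simp [ContinuousLinearMap.add_apply, ContinuousLinearMap.smul_apply,
      ContinuousLinearMap.smulRight_apply, ContinuousLinearMap.flip_apply, hL1]
    abel
  have hVy : fderiv ℝ V ζ Complex.I
      = a • D2 1 Complex.I + (-p.im) • Fx + b • D2 Complex.I Complex.I + p.re • Fy := by
    rw [hVd]
    simp [ContinuousLinearMap.add_apply, ContinuousLinearMap.smul_apply,
      ContinuousLinearMap.smulRight_apply, ContinuousLinearMap.flip_apply, hLI,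
      hsymm Complex.I 1, Complex.mul_re, Complex.mul_im, neg_smul]
    abel
  have hVζ : V ζ = a • Fx + b • Fy := by
    have := hWV.self_of_nhds
    rw [this]
  rw [hVx, hVy, hVζ]
  simp only [map_add, map_smul, ContinuousLinearMap.add_apply, ContinuousLinearMap.smul_apply]
  rw [hJFx, hJFy]
  linear_combination (norm := module) (a:ℝ) • hEx + (b:ℝ) • hEy
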